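/- arXiv:2205.11062 — 5 statements merged into one kernel-verified Lean document; each statement's English description precedes it below -/
import Mathlib

section
/- Let f : X → ℝ be a Morse function on a finite poset X and let M be an admissible Morse matching for f. If x₀, x₁, ..., x_r is a directed path in the graph H_M(X) (the Hasse diagram with edges in M oriented upward and all other edges oriented downward), then there is no z ∈ X with f(x₀) < f(z) < f(x_r). -/
def IsMorseFunction {X : Type*} [PartialOrder X] (f : X → ℝ) : Prop :=
  ∀ a b : X, a ⋖ b → f a < f b

def realizationSet {X : Type*} [PartialOrder X] [Fintype X] (S : Set X) : Set (X → ℝ) :=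
  {w | (∀ a, 0 ≤ w a) ∧ (∑ a, w a) = 1 ∧
    Function.support w ⊆ S ∧ IsChain (· ≤ ·) (Function.support w)}

def HomotopicallyTrivial {X : Type*} [PartialOrder X] [Fintype X] (S : Set X) : Prop :=
  ContractibleSpace ↥(realizationSet S)

def IsPosetMatching {X : Type*} [PartialOrder X] (M : Set (X × X)) : Prop :=
  (∀ p ∈ M, p.1 ⋖ p.2) ∧
  ∀ p ∈ M, ∀ q ∈ M, (p.1 = q.1 ∨ p.1 = q.2 ∨ p.2 = q.1 ∨ p.2 = q.2) → p = q

def hasseEdge {X : Type*} [PartialOrder X] (M : Set (X × X)) (a b : X) : Prop :=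
  (a ⋖ b ∧ (a, b) ∈ M) ∨ (b ⋖ a ∧ (b, a) ∉ M)

def IsMorseMatching {X : Type*} [PartialOrder X] (M : Set (X × X)) : Prop :=
  IsPosetMatching M ∧ ∀ x : X, ¬ Relation.TransGen (hasseEdge M) x x

def AdmissibleEdge {X : Type*} [PartialOrder X] [Fintype X] (f : X → ℝ) (p : X × X) : Prop :=
  HomotopicallyTrivial ({z | z < p.2} \ {p.1}) ∧ ¬ ∃ z, f p.1 < f z ∧ f z < f p.2

def IsAdmissibleMorseMatching {X : Type*} [PartialOrder X] [Fintype X] (f : X → ℝ) (M : Set (X × X)) : Prop :=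
  IsMorseMatching M ∧ ∀ p ∈ M, AdmissibleEdge f p

def IsCriticalPoint {X : Type*} (M : Set (X × X)) (x : X) : Prop :=
  ∀ p ∈ M, p.1 ≠ x ∧ p.2 ≠ x

def orderComplexOn {X : Type*} [PartialOrder X] (S : Set X) : Set (Finset X) :=
  {s | s.Nonempty ∧ ↑s ⊆ S ∧ IsChain (· ≤ ·) (s : Set X)}

theorem no_intermediate_value_along_path {X : Type*} [PartialOrder X] [Fintype X]
    (f : X → ℝ) (M : Set (X × X)) (hf : IsMorseFunction f)
    (hM : IsAdmissibleMorseMatching f M)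
    (r : ℕ) (x : ℕ → X) (hpath : ∀ i < r, hasseEdge M (x i) (x (i + 1))) :
    ¬ ∃ z : X, f (x 0) < f z ∧ f z < f (x r) := by
  have T : ∀ i, i ≤ r → (f (x i) ≤ f (x 0) ∨
      ∃ w, (w, x i) ∈ M ∧ f w ≤ f (x 0) ∧ ¬∃ z, f w < f z ∧ f z < f (x i)) := by
    intro i hi
    induction i with
    | zero => exact Or.inl le_rfl
    | succ i ih =>
      have hi' : i < r := hi
      rcases hpath i hi' with ⟨hc, hmem⟩ | ⟨hc, hnm⟩
      · rcases ih hi'.le with hle | ⟨w, hwM, hw0, hemp⟩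
        · exact Or.inr ⟨x i, hmem, hle, (hM.2 _ hmem).2⟩
        · exfalso
          have heq : (w, x i) = (x i, x (i + 1)) :=
            hM.1.1.2 (w, x i) hwM (x i, x (i + 1)) hmem (Or.inr (Or.inr (Or.inl rfl)))
          have hcov : w ⋖ x i := hM.1.1.1 _ hwM
          exact hcov.ne (congrArg Prod.fst heq)
      · have hfd : f (x (i + 1)) < f (x i) := hf _ _ hc
        rcases ih hi'.le with hle | ⟨w, hwM, hw0, hemp⟩
        · exact Or.inl (hfd.le.trans hle)
        · left
          by_contra hgt
          push_neg at hgt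
          exact hemp ⟨x (i + 1), hw0.trans_lt hgt, hfd⟩
  rintro ⟨z, h0, hr⟩
  rcases T r le_rfl with h | ⟨w, _, hw0, hemp⟩
  · exact absurd (h0.trans hr) (not_lt.2 h)
  · exact hemp ⟨z, hw0.trans_lt h0, hr⟩
end

section
/- Let X be a finite poset, f : X → ℝ a Morse function, and M an admissible Morse matching for f. If x is a source node of the directed graph H_M(X) whose f-value is maximal among all source nodes, and x is not a maximal element of X, then there is a unique y ∈ X covering x, the pair (x,y) belongs to M, and y is a maximal element of X. -/
theorem source_max_structure {X : Type*} [PartialOrder X] [Fintype X]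
    (f : X → ℝ) (M : Set (X × X)) (hf : IsMorseFunction f)
    (hM : IsAdmissibleMorseMatching f M) (x : X)
    (hsrc : ∀ a : X, ¬ hasseEdge M a x)
    (hmaxval : ∀ z : X, (∀ a : X, ¬ hasseEdge M a z) → f z ≤ f x)
    (hnotmax : ∃ w : X, x < w) :
    ∃ y : X, x ⋖ y ∧ (x, y) ∈ M ∧ (∀ z : X, x ⋖ z → z = y) ∧ ∀ w : X, ¬ y < w := by
  obtain ⟨⟨⟨hcov, huniq⟩, hacyc⟩, hadm⟩ := hM
  obtain ⟨w, hxw⟩ := hnotmax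
  obtain ⟨y, hy⟩ := exists_covBy_of_wellFoundedLT (a := x) (not_isMax_iff.mpr ⟨w, hxw⟩)
  have matched : ∀ z : X, x ⋖ z → (x, z) ∈ M := by
    intro z hz
    by_contra h
    exact hsrc z (Or.inr ⟨hz, h⟩)
  have hxyM : (x, y) ∈ M := matched y hy
  refine ⟨y, hy, hxyM, ?_, ?_⟩
  · intro z hz
    have := huniq (x, z) (matched z hz) (x, y) hxyM (Or.inl rfl)
    exact congrArg Prod.snd this
  · intro v hyv
    obtain ⟨u, hu⟩ := exists_covBy_of_wellFoundedLT (a := y) (not_isMax_iff.mpr ⟨v, hyv⟩)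
    have hirr : IsIrrefl X (Relation.TransGen (hasseEdge M)) := ⟨hacyc⟩
    have wfT : WellFounded (Relation.TransGen (hasseEdge M)) :=
      Finite.wellFounded_of_trans_of_irrefl _
    have wf : WellFounded (hasseEdge M) :=
      Subrelation.wf (fun h => Relation.TransGen.single h) wfT
    set S : Set X := {z | f y ≤ f z ∧ (f z = f y → ∃ w', (z, w') ∈ M)} with hS
    have hus : u ∈ S := ⟨(hf y u hu).le, fun h => absurd h (hf y u hu).ne'⟩
    obtain ⟨z, hzS, hzmin⟩ := wf.has_min S ⟨u, hus⟩
    have hzsrc : ∀ a : X, ¬ hasseEdge M a z := by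
      intro a ha
      rcases ha with ⟨haz, hmem⟩ | ⟨hza, hnm⟩
      · rcases eq_or_lt_of_le hzS.1 with heq | hlt
        · obtain ⟨w', hw'⟩ := hzS.2 heq.symm
          have := huniq (a, z) hmem (z, w') hw' (Or.inr (Or.inr (Or.inl rfl)))
          exact absurd (congrArg Prod.fst this) haz.lt.ne
        · have hna := (hadm (a, z) hmem).2
          have hfa : f y ≤ f a := by
            by_contra h
            exact hna ⟨y, lt_of_not_ge h, hlt⟩
          exact hzmin a ⟨hfa, fun _ => ⟨z, hmem⟩⟩ (Or.inl ⟨haz, hmem⟩)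
      · exact hzmin a ⟨(hzS.1.trans (hf z a hza).le),
          fun h => absurd h ((hzS.1.trans_lt (hf z a hza)).ne')⟩
          (Or.inr ⟨hza, hnm⟩)
    have h1 : f z ≤ f x := hmaxval z hzsrc
    have h2 : f x < f y := hf x y hy
    exact absurd (h2.trans_le hzS.1) h1.not_gt
end

section
/- In a finite poset X, if x is an up-beat point, i.e., there is a unique element y covering x and moreover y ≥ z for every z > x, then the inclusion of the order complex of X \ {x} into the order complex of X is a homotopy equivalence (in fact a strong deformation retract). -/
set_option linter.unusedSectionVars false

section Aux
variable {X : Type*} [PartialOrder X] [Fintype X]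

open Classical in
noncomputable def rmap (x y : X) (w : X → ℝ) : X → ℝ :=
  fun a => if a = x then 0 else if a = y then w x + w y else w a

lemma rmap_nonneg (x y : X) (w : X → ℝ) (hw : ∀ a, 0 ≤ w a) (a : X) :
    0 ≤ rmap x y w a := by
  unfold rmap
  split_ifs
  · exact le_rfl
  · exact add_nonneg (hw x) (hw y)
  · exact hw a

lemma rmap_eq_of_zero (x y : X) (w : X → ℝ) (hx : w x = 0) : rmap x y w = w := by
  funext a
  unfold rmap
  split_ifs with h1 h2
  · rw [h1, hx]
  · rw [h2]; rw [hx]; ring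
  · rfl

lemma rmap_sum (x y : X) (hxy : x ≠ y) (w : X → ℝ) :
    ∑ a, rmap x y w a = ∑ a, w a := by
  classical
  have h1 : rmap x y w = Function.update (Function.update w x 0) y (w x + w y) := by
    funext a
    rw [Function.update_apply, Function.update_apply]
    unfold rmap
    by_cases hax : a = x
    · simp [hax, hxy]
    · by_cases hay : a = y <;> simp [hax, hay, Ne.symm hxy]
  rw [h1, Finset.sum_update_of_mem (Finset.mem_univ y)]
  have hx : x ∈ Finset.univ \ {y} := by simp [hxy]
  rw [Finset.sum_update_of_mem hx]
  have h2 : ∑ a, w a = w y + ∑ a ∈ Finset.univ \ {y}, w a := by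
    rw [Finset.sum_eq_sum_sdiff_singleton_add (Finset.mem_univ y)]; ring
  have h3 : ∑ a ∈ Finset.univ \ {y}, w a = w x + ∑ a ∈ (Finset.univ \ {y}) \ {x}, w a := by
    rw [Finset.sum_eq_sum_sdiff_singleton_add hx]; ring
  rw [h2, h3]; ring

lemma rmap_support (x y : X) (w : X → ℝ) :
    Function.support (rmap x y w) ⊆ insert y (Function.support w) := by
  intro a ha
  rw [Function.mem_support] at ha
  unfold rmap at ha
  by_cases hax : a = x
  · simp [hax] at ha
  · by_cases hay : a = y
    · exact Set.mem_insert_iff.mpr (Or.inl hay)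
    · simp [hax, hay] at ha
      exact Set.mem_insert_iff.mpr (Or.inr ha)

lemma chain_insert (x y : X) (hxy : x < y) (hmin : ∀ z, x < z → y ≤ z)
    {S : Set X} (hS : IsChain (· ≤ ·) S) (hxS : x ∈ S) :
    IsChain (· ≤ ·) (insert y S) := by
  have key : ∀ b ∈ S, y ≤ b ∨ b ≤ y := by
    intro b hb
    rcases eq_or_ne b x with rfl | hbx
    · exact Or.inr hxy.le
    · rcases hS hxS hb (Ne.symm hbx) with h | h
      · exact Or.inl (hmin b (lt_of_le_of_ne h (Ne.symm hbx)))
      · exact Or.inr (h.trans hxy.le)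
  intro a ha b hb hab
  rcases Set.mem_insert_iff.mp ha with rfl | haS
  · rcases Set.mem_insert_iff.mp hb with rfl | hbS
    · exact absurd rfl hab
    · exact (key b hbS).imp id id
  · rcases Set.mem_insert_iff.mp hb with rfl | hbS
    · exact ((key a haS).symm).imp id id
    · exact hS haS hbS hab

lemma mem_mix (x y : X) (hxy : x < y) (hmin : ∀ z, x < z → y ≤ z)
    (w : X → ℝ) (hw : w ∈ realizationSet (Set.univ : Set X))
    (s t : ℝ) (hs : 0 ≤ s) (ht : 0 ≤ t) (hst : s + t = 1) :
    (fun a => s * w a + t * rmap x y w a) ∈ realizationSet (Set.univ : Set X) := by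
  obtain ⟨hpos, hsum, _, hchain⟩ := hw
  by_cases hx : w x = 0
  · have heq : (fun a => s * w a + t * rmap x y w a) = w := by
      rw [rmap_eq_of_zero x y w hx]
      funext a
      linear_combination w a * hst
    rw [heq]
    exact ⟨hpos, hsum, Set.subset_univ _, hchain⟩
  · refine ⟨?_, ?_, Set.subset_univ _, ?_⟩
    · intro a
      exact add_nonneg (mul_nonneg hs (hpos a)) (mul_nonneg ht (rmap_nonneg x y w hpos a))
    · rw [Finset.sum_add_distrib, ← Finset.mul_sum, ← Finset.mul_sum,
        rmap_sum x y hxy.ne w, hsum]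
      linarith
    · have hsub : Function.support (fun a => s * w a + t * rmap x y w a)
          ⊆ insert y (Function.support w) := by
        intro a ha
        rw [Function.mem_support] at ha
        by_cases hwa : w a = 0
        · have hrm : rmap x y w a ≠ 0 := by
            intro h0
            apply ha
            simp [hwa, h0]
          exact rmap_support x y w hrm
        · exact Set.mem_insert_iff.mpr (Or.inr hwa)
      exact (chain_insert x y hxy hmin hchain hx).mono hsub

lemma rmap_mem (x y : X) (hxy : x < y) (hmin : ∀ z, x < z → y ≤ z)
    (w : X → ℝ) (hw : w ∈ realizationSet (Set.univ : Set X)) :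
    rmap x y w ∈ realizationSet ({x}ᶜ : Set X) := by
  have h1 : rmap x y w = (fun a => (0:ℝ) * w a + 1 * rmap x y w a) := by
    funext a; ring
  have h2 := mem_mix x y hxy hmin w hw 0 1 le_rfl zero_le_one (by ring)
  rw [← h1] at h2
  obtain ⟨hpos, hsum, _, hchain⟩ := h2
  refine ⟨hpos, hsum, ?_, hchain⟩
  intro a ha
  rw [Function.mem_support] at ha
  intro hax
  rw [Set.mem_singleton_iff] at hax
  apply ha
  subst hax
  unfold rmap
  simp

lemma rmap_continuous (x y : X) : Continuous (rmap x y : (X → ℝ) → (X → ℝ)) := by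
  refine continuous_pi fun a => ?_
  unfold rmap
  split_ifs <;> fun_prop

end Aux

theorem upbeat_deformation_retract {X : Type*} [PartialOrder X] [Fintype X]
    (x y : X) (hcov : x ⋖ y) (huniq : ∀ z : X, x ⋖ z → z = y)
    (hmin : ∀ z : X, x < z → y ≤ z) :
    ∃ e : ContinuousMap.HomotopyEquiv
        ↥(realizationSet ({x}ᶜ : Set X)) ↥(realizationSet (Set.univ : Set X)),
      ∀ w : ↥(realizationSet ({x}ᶜ : Set X)), ((e.toFun w : X → ℝ) = (w : X → ℝ)) := by
  classical
  have hxy : x < y := hcov.lt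
  have memI : ∀ w : ↥(realizationSet ({x}ᶜ : Set X)),
      (w : X → ℝ) ∈ realizationSet (Set.univ : Set X) := by
    rintro ⟨w, h1, h2, _, h4⟩
    exact ⟨h1, h2, Set.subset_univ _, h4⟩
  let i : C(↥(realizationSet ({x}ᶜ : Set X)), ↥(realizationSet (Set.univ : Set X))) :=
    ⟨fun w => ⟨w.1, memI w⟩, Continuous.subtype_mk continuous_subtype_val _⟩
  let r : C(↥(realizationSet (Set.univ : Set X)), ↥(realizationSet ({x}ᶜ : Set X))) :=
    ⟨fun w => ⟨rmap x y w.1, rmap_mem x y hxy hmin w.1 w.2⟩,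
      Continuous.subtype_mk ((rmap_continuous x y).comp continuous_subtype_val) _⟩
  have hri : r.comp i = ContinuousMap.id _ := by
    apply ContinuousMap.ext
    intro w
    apply Subtype.ext
    change rmap x y (w : X → ℝ) = (w : X → ℝ)
    apply rmap_eq_of_zero
    by_contra h0
    have hx : x ∈ Function.support (w : X → ℝ) := h0
    have := w.2.2.2.1 hx
    simp at this
  have Hmem : ∀ (t : unitInterval) (w : ↥(realizationSet (Set.univ : Set X))),
      (fun a => (t : ℝ) * (w : X → ℝ) a + (1 - (t : ℝ)) * rmap x y (w : X → ℝ) a)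
        ∈ realizationSet (Set.univ : Set X) := by
    intro t w
    exact mem_mix x y hxy hmin _ w.2 _ _ t.2.1 (by linarith [t.2.2]) (by ring)
  let H : ContinuousMap.Homotopy (i.comp r) (ContinuousMap.id _) :=
    { toFun := fun p => ⟨fun a => (p.1 : ℝ) * (p.2 : X → ℝ) a
          + (1 - (p.1 : ℝ)) * rmap x y (p.2 : X → ℝ) a, Hmem p.1 p.2⟩
      continuous_toFun := by
        apply Continuous.subtype_mk
        apply continuous_pi
        intro a
        have h1 : Continuous (fun p : unitInterval × ↥(realizationSet (Set.univ : Set X)) =>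
            (p.1 : ℝ)) := continuous_subtype_val.comp continuous_fst
        have h2 : Continuous (fun p : unitInterval × ↥(realizationSet (Set.univ : Set X)) =>
            (p.2 : X → ℝ)) := continuous_subtype_val.comp continuous_snd
        exact (h1.mul ((continuous_apply a).comp h2)).add
          ((continuous_const.sub h1).mul
            ((continuous_apply a).comp ((rmap_continuous x y).comp h2)))
      map_zero_left := by
        intro w
        apply Subtype.ext
        funext a
        show (0:ℝ) * _ + (1 - 0) * rmap x y (w : X → ℝ) a = _
        simp
        rfl
      map_one_left := by
        intro w
        apply Subtype.ext
        funext a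
        show (1:ℝ) * _ + (1 - 1) * _ = _
        simp }
  refine ⟨⟨i, r, ?_, ?_⟩, fun w => rfl⟩
  · exact hri ▸ ContinuousMap.Homotopic.refl _
  · exact ⟨H⟩
end

section
/- Let X, Y be disjoint finite posets with Morse functions f, g (with f(x) < g(y) for all x ∈ X, y ∈ Y) and admissible Morse matchings M on X and N on Y. Then M ⊔ N is a Morse matching on X ⊛ Y, i.e., the digraph H_{M⊔N}(X ⊛ Y) is acyclic, and every point of X ⊛ Y is critical for M ⊔ N iff it is critical for M (if in X) or for N (if in Y). -/
def sumMatching {X Y : Type*} (M : Set (X × X)) (N : Set (Y × Y)) :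
    Set ((X ⊕ₗ Y) × (X ⊕ₗ Y)) :=
  (fun p : X × X => (toLex (Sum.inl p.1), toLex (Sum.inl p.2))) '' M ∪
  (fun p : Y × Y => (toLex (Sum.inr p.1), toLex (Sum.inr p.2))) '' N

section Aux

variable {X Y : Type*} [PartialOrder X] [PartialOrder Y]

lemma osmm_covBy_inl {a b : X} :
    (toLex (Sum.inl a) : X ⊕ₗ Y) ⋖ toLex (Sum.inl b) ↔ a ⋖ b := by
  constructor
  · rintro ⟨h1, h2⟩
    exact ⟨Sum.Lex.inl_lt_inl_iff.mp h1, fun c hac hcb =>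
      h2 (Sum.Lex.inl_lt_inl_iff.mpr hac) (Sum.Lex.inl_lt_inl_iff.mpr hcb)⟩
  · rintro ⟨h1, h2⟩
    refine ⟨Sum.Lex.inl_lt_inl_iff.mpr h1, fun c hac hcb => ?_⟩
    rcases c with c | c
    · exact h2 (Sum.Lex.inl_lt_inl_iff.mp hac) (Sum.Lex.inl_lt_inl_iff.mp hcb)
    · exact Sum.Lex.not_inr_le_inl hcb.le

lemma osmm_covBy_inr {a b : Y} :
    (toLex (Sum.inr a) : X ⊕ₗ Y) ⋖ toLex (Sum.inr b) ↔ a ⋖ b := by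
  constructor
  · rintro ⟨h1, h2⟩
    exact ⟨Sum.Lex.inr_lt_inr_iff.mp h1, fun c hac hcb =>
      h2 (Sum.Lex.inr_lt_inr_iff.mpr hac) (Sum.Lex.inr_lt_inr_iff.mpr hcb)⟩
  · rintro ⟨h1, h2⟩
    refine ⟨Sum.Lex.inr_lt_inr_iff.mpr h1, fun c hac hcb => ?_⟩
    rcases c with c | c
    · exact Sum.Lex.not_inr_le_inl hac.le
    · exact h2 (Sum.Lex.inr_lt_inr_iff.mp hac) (Sum.Lex.inr_lt_inr_iff.mp hcb)

lemma osmm_mem_inl {M : Set (X × X)} {N : Set (Y × Y)} {a b : X} :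
    ((toLex (Sum.inl a) : X ⊕ₗ Y), toLex (Sum.inl b)) ∈ sumMatching M N ↔ (a, b) ∈ M := by
  constructor
  · rintro (⟨⟨p, q⟩, hp, he⟩ | ⟨⟨p, q⟩, hp, he⟩) <;>
      simp only [Prod.mk.injEq, toLex_inj, Sum.inl.injEq] at he
    · obtain ⟨rfl, rfl⟩ := he; exact hp
    · exact absurd he.1 (by simp)
  · intro h; exact Or.inl ⟨(a, b), h, rfl⟩

lemma osmm_mem_inr {M : Set (X × X)} {N : Set (Y × Y)} {a b : Y} :
    ((toLex (Sum.inr a) : X ⊕ₗ Y), toLex (Sum.inr b)) ∈ sumMatching M N ↔ (a, b) ∈ N := by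
  constructor
  · rintro (⟨⟨p, q⟩, hp, he⟩ | ⟨⟨p, q⟩, hp, he⟩) <;>
      simp only [Prod.mk.injEq, toLex_inj, Sum.inr.injEq] at he
    · exact absurd he.1 (by simp)
    · obtain ⟨rfl, rfl⟩ := he; exact hp
  · intro h; exact Or.inr ⟨(a, b), h, rfl⟩

lemma osmm_not_mem_mixed {M : Set (X × X)} {N : Set (Y × Y)} {a : X} {b : Y} :
    ((toLex (Sum.inl a) : X ⊕ₗ Y), toLex (Sum.inr b)) ∉ sumMatching M N := by
  rintro (⟨⟨p, q⟩, hp, he⟩ | ⟨⟨p, q⟩, hp, he⟩) <;>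
    simp only [Prod.mk.injEq, toLex_inj] at he <;> simp_all

lemma osmm_edge_inl {M : Set (X × X)} {N : Set (Y × Y)} {a : X} {c : X ⊕ₗ Y}
    (h : hasseEdge (sumMatching M N) (toLex (Sum.inl a)) c) :
    ∃ a', c = toLex (Sum.inl a') ∧ hasseEdge M a a' := by
  obtain c | c := c
  · refine ⟨c, rfl, ?_⟩
    rcases h with ⟨h1, h2⟩ | ⟨h1, h2⟩
    · exact Or.inl ⟨osmm_covBy_inl.mp h1, osmm_mem_inl.mp h2⟩
    · exact Or.inr ⟨osmm_covBy_inl.mp h1, fun hm => h2 (osmm_mem_inl.mpr hm)⟩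
  · exfalso
    rcases h with ⟨h1, h2⟩ | ⟨h1, h2⟩
    · exact osmm_not_mem_mixed h2
    · exact Sum.Lex.not_inr_le_inl h1.le

lemma osmm_edge_inr {M : Set (X × X)} {N : Set (Y × Y)} {b : Y} {c : X ⊕ₗ Y}
    (h : hasseEdge (sumMatching M N) (toLex (Sum.inr b)) c) :
    (∃ b', c = toLex (Sum.inr b') ∧ hasseEdge N b b') ∨ ∃ a, c = toLex (Sum.inl a) := by
  obtain c | c := c
  · exact Or.inr ⟨c, rfl⟩
  · refine Or.inl ⟨c, rfl, ?_⟩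
    rcases h with ⟨h1, h2⟩ | ⟨h1, h2⟩
    · exact Or.inl ⟨osmm_covBy_inr.mp h1, osmm_mem_inr.mp h2⟩
    · exact Or.inr ⟨osmm_covBy_inr.mp h1, fun hm => h2 (osmm_mem_inr.mpr hm)⟩

lemma osmm_trans_inl {M : Set (X × X)} {N : Set (Y × Y)} {a : X} {c : X ⊕ₗ Y}
    (h : Relation.TransGen (hasseEdge (sumMatching M N)) (toLex (Sum.inl a)) c) :
    ∃ a', c = toLex (Sum.inl a') ∧ Relation.TransGen (hasseEdge M) a a' := by
  induction h with
  | single h =>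
    obtain ⟨a', rfl, he⟩ := osmm_edge_inl h
    exact ⟨a', rfl, Relation.TransGen.single he⟩
  | tail _ h ih =>
    obtain ⟨a', rfl, ht⟩ := ih
    obtain ⟨a'', rfl, he⟩ := osmm_edge_inl h
    exact ⟨a'', rfl, ht.tail he⟩

lemma osmm_trans_inr {M : Set (X × X)} {N : Set (Y × Y)} {b : Y} {c : X ⊕ₗ Y}
    (h : Relation.TransGen (hasseEdge (sumMatching M N)) (toLex (Sum.inr b)) c) :
    (∃ b', c = toLex (Sum.inr b') ∧ Relation.TransGen (hasseEdge N) b b') ∨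
      ∃ a, c = toLex (Sum.inl a) := by
  induction h with
  | single h =>
    rcases osmm_edge_inr h with ⟨b', rfl, he⟩ | ⟨a, rfl⟩
    · exact Or.inl ⟨b', rfl, Relation.TransGen.single he⟩
    · exact Or.inr ⟨a, rfl⟩
  | tail _ h ih =>
    rcases ih with ⟨b', rfl, ht⟩ | ⟨a, rfl⟩
    · rcases osmm_edge_inr h with ⟨b'', rfl, he⟩ | ⟨a, rfl⟩
      · exact Or.inl ⟨b'', rfl, ht.tail he⟩
      · exact Or.inr ⟨a, rfl⟩
    · obtain ⟨a', rfl, _⟩ := osmm_edge_inl h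
      exact Or.inr ⟨a', rfl⟩

end Aux

theorem ordinal_sum_morse_matching {X Y : Type*} [PartialOrder X] [PartialOrder Y]
    [Fintype X] [Fintype Y]
    (f : X → ℝ) (g : Y → ℝ) (hf : IsMorseFunction f) (hg : IsMorseFunction g)
    (hfg : ∀ (x : X) (y : Y), f x < g y)
    (M : Set (X × X)) (N : Set (Y × Y))
    (hM : IsAdmissibleMorseMatching f M) (hN : IsAdmissibleMorseMatching g N) :
    IsMorseMatching (sumMatching M N) ∧
    (∀ x : X, IsCriticalPoint (sumMatching M N) (toLex (Sum.inl x)) ↔ IsCriticalPoint M x) ∧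
    (∀ y : Y, IsCriticalPoint (sumMatching M N) (toLex (Sum.inr y)) ↔ IsCriticalPoint N y) := by
  obtain ⟨⟨⟨hMcov, hMdisj⟩, hMacyc⟩, -⟩ := hM
  obtain ⟨⟨⟨hNcov, hNdisj⟩, hNacyc⟩, -⟩ := hN
  refine ⟨⟨⟨?_, ?_⟩, ?_⟩, ?_, ?_⟩
  · rintro p (⟨q, hq, rfl⟩ | ⟨q, hq, rfl⟩)
    · exact osmm_covBy_inl.mpr (hMcov q hq)
    · exact osmm_covBy_inr.mpr (hNcov q hq)
  · rintro p (⟨q, hq, rfl⟩ | ⟨q, hq, rfl⟩) p' (⟨q', hq', rfl⟩ | ⟨q', hq', rfl⟩) h <;>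
      simp only [toLex_inj, Sum.inl.injEq, Sum.inr.injEq, Prod.mk.injEq] at h ⊢ <;>
      [skip; exact absurd h (by simp); exact absurd h (by simp); skip]
    · have := hMdisj q hq q' hq' h
      simp [Prod.ext_iff] at this; exact this
    · have := hNdisj q hq q' hq' h
      simp [Prod.ext_iff] at this; exact this
  · rintro x h
    obtain a | b := x
    · obtain ⟨a', he, ht⟩ := osmm_trans_inl h
      obtain rfl : a = a' := Sum.inl.inj he
      exact hMacyc a ht
    · rcases osmm_trans_inr h with ⟨b', he, ht⟩ | ⟨a, he⟩
      · obtain rfl : b = b' := Sum.inr.inj he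
        exact hNacyc b ht
      · exact Sum.inl_ne_inr he.symm
  · intro x
    constructor
    · intro h p hp
      have := h _ (Or.inl ⟨p, hp, rfl⟩)
      simpa [Prod.ext_iff] using this
    · rintro h p (⟨q, hq, rfl⟩ | ⟨q, hq, rfl⟩) <;> simp_all
      exact h q hq
  · intro y
    constructor
    · intro h p hp
      have := h _ (Or.inr ⟨p, hp, rfl⟩)
      simpa [Prod.ext_iff] using this
    · rintro h p (⟨q, hq, rfl⟩ | ⟨q, hq, rfl⟩) <;> simp_all
      exact h q hq
end

section
/- Let X be a finite poset and x ∈ X maximal. If the order complex of the strict down-set {z : z < x} is contractible, then the inclusion K(X \ {x}) ↪ K(X) is a homotopy equivalence. -/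
namespace RemoveMax

open Function Set unitInterval Topology

variable {X : Type*} [PartialOrder X] [Fintype X]

theorem rs_mono {S T : Set X} (h : S ⊆ T) : realizationSet S ⊆ realizationSet T :=
  fun _ hw => ⟨hw.1, hw.2.1, hw.2.2.1.trans h, hw.2.2.2⟩

theorem rs_apply_le_one {S : Set X} {w : X → ℝ} (hw : w ∈ realizationSet S) (a : X) : w a ≤ 1 := by
  calc w a ≤ ∑ b, w b := Finset.single_le_sum (fun b _ => hw.1 b) (Finset.mem_univ a)
  _ = 1 := hw.2.1

theorem rs_apply_eq_zero {S : Set X} {w : X → ℝ} (hw : w ∈ realizationSet S) {a : X}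
    (ha : a ∉ S) : w a = 0 := by
  by_contra h
  exact ha (hw.2.2.1 h)

theorem rs_apex {S : Set X} {w : X → ℝ} (hw : w ∈ realizationSet S) {x : X}
    (hx : w x = 1) {z : X} (hz : z ≠ x) : w z = 0 := by
  classical
  have h1 : w x + ∑ b ∈ Finset.univ.erase x, w b = ∑ b, w b :=
    Finset.add_sum_erase Finset.univ w (Finset.mem_univ x)
  have h2 : ∑ b ∈ Finset.univ.erase x, w b = 0 := by
    rw [hw.2.1] at h1; linarith
  exact (Finset.sum_eq_zero_iff_of_nonneg (fun b _ => hw.1 b)).mp h2 z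
    (Finset.mem_erase.mpr ⟨hz, Finset.mem_univ z⟩)

theorem rs_isClosed (S : Set X) : IsClosed (realizationSet S) := by
  have h1 : IsClosed {w : X → ℝ | ∀ a, 0 ≤ w a} := by
    rw [Set.setOf_forall]
    exact isClosed_iInter fun a => isClosed_le continuous_const (continuous_apply a)
  have h2 : IsClosed {w : X → ℝ | (∑ a, w a) = 1} :=
    isClosed_eq (continuous_finset_sum _ fun a _ => continuous_apply a) continuous_const
  have h3 : IsClosed {w : X → ℝ | Function.support w ⊆ S} := by
    have he : {w : X → ℝ | Function.support w ⊆ S} =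
        ⋂ (a : X) (_ : a ∉ S), {w : X → ℝ | w a = 0} := by
      ext w
      simp only [Set.mem_setOf_eq, Set.mem_iInter]
      constructor
      · intro h a ha
        by_contra h0
        exact ha (h h0)
      · intro h a ha
        by_contra haS
        exact ha (h a haS)
    rw [he]
    exact isClosed_iInter fun a => isClosed_iInter fun _ =>
      isClosed_eq (continuous_apply a) continuous_const
  have h4 : IsClosed {w : X → ℝ | IsChain (· ≤ ·) (Function.support w)} := by
    have he : {w : X → ℝ | IsChain (· ≤ ·) (Function.support w)} =
        ⋂ (a : X) (b : X) (_ : ¬ (a ≤ b ∨ b ≤ a)), {w : X → ℝ | w a * w b = 0} := by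
      ext w
      simp only [Set.mem_setOf_eq, Set.mem_iInter]
      constructor
      · intro hch a b hab
        by_contra h0
        have ha : w a ≠ 0 := fun h => h0 (by rw [h, zero_mul])
        have hb : w b ≠ 0 := fun h => h0 (by rw [h, mul_zero])
        have hne : a ≠ b := by rintro rfl; exact hab (Or.inl le_rfl)
        exact hab (hch (Function.mem_support.mpr ha) (Function.mem_support.mpr hb) hne)
      · intro h a ha b hb hne
        by_contra hab
        rcases mul_eq_zero.mp (h a b hab) with h0 | h0
        · exact Function.mem_support.mp ha h0
        · exact Function.mem_support.mp hb h0
    rw [he]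
    exact isClosed_iInter fun a => isClosed_iInter fun b => isClosed_iInter fun _ =>
      isClosed_eq ((continuous_apply a).mul (continuous_apply b)) continuous_const
  have he : realizationSet S = {w : X → ℝ | ∀ a, 0 ≤ w a} ∩ ({w : X → ℝ | (∑ a, w a) = 1} ∩
      ({w : X → ℝ | Function.support w ⊆ S} ∩
       {w : X → ℝ | IsChain (· ≤ ·) (Function.support w)})) := by
    ext w
    simp only [realizationSet, Set.mem_setOf_eq, Set.mem_inter_iff]
  rw [he]
  exact h1.inter (h2.inter (h3.inter h4))

theorem rs_isCompact (S : Set X) : IsCompact (realizationSet S) := by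
  refine IsCompact.of_isClosed_subset
    (isCompact_univ_pi fun _ : X => isCompact_Icc (a := (0:ℝ)) (b := 1)) (rs_isClosed S) ?_
  intro w hw
  rw [Set.mem_univ_pi]
  exact fun a => ⟨hw.1 a, rs_apply_le_one hw a⟩


section Cone

variable [DecidableEq X]

noncomputable def coneMap (x : X) (v : X → ℝ) (t : ℝ) : X → ℝ :=
  fun z => (1 - t) * v z + t * (if z = x then 1 else 0)

theorem vx0 {x : X} {v : X → ℝ} (hv : v ∈ realizationSet {z : X | z < x}) : v x = 0 :=
  rs_apply_eq_zero hv (by simp)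

theorem coneMap_zero (x : X) (v : X → ℝ) : coneMap x v 0 = v := by
  funext z; simp [coneMap]

theorem coneMap_one (x : X) (v : X → ℝ) : coneMap x v 1 = fun z => if z = x then 1 else 0 := by
  funext z; simp [coneMap]

theorem coneMap_apply_x {x : X} {v : X → ℝ} (hvx : v x = 0) (t : ℝ) : coneMap x v t x = t := by
  simp [coneMap, hvx]

theorem coneMap_mem {x : X} {v : X → ℝ} (hv : v ∈ realizationSet {z : X | z < x})
    {t : ℝ} (ht : t ∈ Set.Icc (0:ℝ) 1) :
    coneMap x v t ∈ realizationSet (insert x {z : X | z < x}) := by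
  obtain ⟨ht0, ht1⟩ := ht
  refine ⟨?_, ?_, ?_, ?_⟩
  · intro a
    refine add_nonneg (mul_nonneg (by linarith) (hv.1 a)) (mul_nonneg ht0 ?_)
    split <;> norm_num
  · simp only [coneMap]
    rw [Finset.sum_add_distrib, ← Finset.mul_sum, ← Finset.mul_sum, hv.2.1,
      Finset.sum_ite_eq' Finset.univ x (fun _ => (1:ℝ))]
    simp
  · intro z hz
    rcases eq_or_ne z x with rfl | hne
    · exact Set.mem_insert _ _
    · have : coneMap x v t z = (1 - t) * v z := by simp [coneMap, hne]
      have hvz : v z ≠ 0 := by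
        intro h0
        exact (Function.mem_support.mp hz) (by rw [this, h0, mul_zero])
      exact Set.mem_insert_of_mem _ (hv.2.2.1 hvz)
  · have hsub : Function.support (coneMap x v t) ⊆ insert x (Function.support v) := by
      intro z hz
      rcases eq_or_ne z x with rfl | hne
      · exact Set.mem_insert _ _
      · refine Set.mem_insert_of_mem _ ?_
        intro h0
        exact (Function.mem_support.mp hz) (by simp [coneMap, hne, h0])
    refine IsChain.mono hsub (IsChain.insert hv.2.2.2 ?_)
    intro b hb _
    exact Or.inr (le_of_lt (hv.2.2.1 hb))

theorem apex_mem {x : X} : (fun z => if z = x then (1:ℝ) else 0) ∈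
    realizationSet (insert x {z : X | z < x}) := by
  refine ⟨?_, ?_, ?_, ?_⟩
  · intro a
    show (0:ℝ) ≤ if a = x then 1 else 0
    split <;> norm_num
  · show (∑ a : X, if a = x then (1:ℝ) else 0) = 1
    rw [Finset.sum_ite_eq' Finset.univ x (fun _ => (1:ℝ))]; simp
  · intro z hz
    have : z = x := by
      by_contra h
      exact (Function.mem_support.mp hz) (by simp [h])
    exact this ▸ Set.mem_insert _ _
  · intro a ha b hb hne
    exfalso
    have ha' : a = x := by by_contra h; exact (Function.mem_support.mp ha) (by simp [h])
    have hb' : b = x := by by_contra h; exact (Function.mem_support.mp hb) (by simp [h])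
    exact hne (ha'.trans hb'.symm)

noncomputable def uFun (x : X) (w : X → ℝ) : X → ℝ :=
  fun z => if z = x then 0 else w z / (1 - w x)

theorem u_mem {x : X} {w : X → ℝ} (hw : w ∈ realizationSet (insert x {z : X | z < x}))
    (h1 : w x ≠ 1) : uFun x w ∈ realizationSet {z : X | z < x} := by
  have hlt : w x < 1 := lt_of_le_of_ne (rs_apply_le_one hw x) h1
  have hpos : (0:ℝ) < 1 - w x := by linarith
  refine ⟨?_, ?_, ?_, ?_⟩
  · intro a
    unfold uFun
    split
    · exact le_refl 0
    · exact div_nonneg (hw.1 a) hpos.le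
  · have hc : ∀ z, uFun x w z = w z / (1 - w x) - (if z = x then w x / (1 - w x) else 0) := by
      intro z
      unfold uFun
      by_cases h : z = x
      · subst h; simp
      · simp [h]
    rw [Finset.sum_congr rfl fun z _ => hc z, Finset.sum_sub_distrib,
      Finset.sum_ite_eq' Finset.univ x (fun _ => w x / (1 - w x)), ← Finset.sum_div, hw.2.1]
    simp only [Finset.mem_univ, if_true]
    field_simp
  · intro z hz
    have hzx : z ≠ x := by
      rintro rfl
      exact (Function.mem_support.mp hz) (by simp [uFun])
    have hwz : w z ≠ 0 := by
      intro h0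
      exact (Function.mem_support.mp hz) (by simp [uFun, hzx, h0])
    rcases hw.2.2.1 hwz with h | h
    · exact absurd h hzx
    · exact h
  · refine IsChain.mono ?_ hw.2.2.2
    intro z hz
    have hzx : z ≠ x := by
      rintro rfl
      exact (Function.mem_support.mp hz) (by simp [uFun])
    intro h0
    exact (Function.mem_support.mp hz) (by simp [uFun, hzx, h0])

end Cone

section TimePar

noncomputable def sigI (t : ℝ) (s : unitInterval) : unitInterval :=
  Set.projIcc 0 1 zero_le_one (t * min (2 * (s : ℝ)) 1)

noncomputable def tauR (t : ℝ) (s : unitInterval) : ℝ := t * min 1 (2 - 2 * (s : ℝ))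

theorem sigI_of_t0 (s : unitInterval) : sigI 0 s = 0 := by
  apply Subtype.ext
  rw [sigI, Set.coe_projIcc]
  norm_num

theorem sigI_of_s0 (t : ℝ) : sigI t 0 = 0 := by
  apply Subtype.ext
  rw [sigI, Set.coe_projIcc]
  norm_num

theorem sigI_of_mem {t : ℝ} (ht : t ∈ Set.Icc (0:ℝ) 1) (s : unitInterval) :
    (sigI t s : ℝ) = t * min (2 * (s : ℝ)) 1 := by
  rw [sigI, Set.coe_projIcc]
  have h0 : 0 ≤ t * min (2 * (s : ℝ)) 1 :=
    mul_nonneg ht.1 (le_min (by have := s.2.1; linarith) zero_le_one)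
  have h1 : t * min (2 * (s : ℝ)) 1 ≤ 1 :=
    mul_le_one₀ ht.2 (le_min (by have := s.2.1; linarith) zero_le_one) (min_le_right _ _)
  rw [min_eq_right h1, max_eq_right h0]

theorem tauR_of_s0 (t : ℝ) : tauR t 0 = t := by
  rw [tauR]
  norm_num

theorem tauR_of_s1 (t : ℝ) : tauR t 1 = 0 := by
  rw [tauR]
  norm_num

theorem tauR_of_t0 (s : unitInterval) : tauR 0 s = 0 := by
  rw [tauR]; ring

theorem tauR_mem {t : ℝ} (ht : t ∈ Set.Icc (0:ℝ) 1) (s : unitInterval) :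
    tauR t s ∈ Set.Icc (0:ℝ) 1 := by
  have hs0 := s.2.1
  have hs1 := s.2.2
  constructor
  · exact mul_nonneg ht.1 (le_min zero_le_one (by linarith))
  · exact mul_le_one₀ ht.2 (le_min zero_le_one (by linarith)) (min_le_left _ _)

end TimePar


section Main

variable [DecidableEq X] (x : X)
  (c : ↥(realizationSet {z : X | z < x}))
  (H : C(unitInterval × ↥(realizationSet {z : X | z < x}), ↥(realizationSet {z : X | z < x})))

noncomputable def uB (w : ↥(realizationSet (insert x {z : X | z < x}))) :
    ↥(realizationSet {z : X | z < x}) :=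
  if h : (w : X → ℝ) x = 1 then c else ⟨uFun x (w : X → ℝ), u_mem w.2 h⟩

noncomputable def Fst (p : ↥(realizationSet (insert x {z : X | z < x})) × unitInterval) :
    X → ℝ :=
  coneMap x (H (sigI ((p.1 : X → ℝ) x) p.2, uB x c p.1) : X → ℝ) (tauR ((p.1 : X → ℝ) x) p.2)

noncomputable def Ftil (r : ↥(realizationSet {z : X | z < x}) × unitInterval × unitInterval) :
    X → ℝ :=
  coneMap x ((H (sigI (r.2.1 : ℝ) r.2.2, r.1)) : X → ℝ) (tauR (r.2.1 : ℝ) r.2.2)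

noncomputable def Qmap (r : ↥(realizationSet {z : X | z < x}) × unitInterval × unitInterval) :
    ↥(realizationSet (insert x {z : X | z < x})) × unitInterval :=
  (⟨coneMap x (r.1 : X → ℝ) (r.2.1 : ℝ), coneMap_mem r.1.2 r.2.1.2⟩, r.2.2)

theorem Fst_Qmap (hH1 : ∀ v, H (1, v) = c) (r) : Fst x c H (Qmap x r) = Ftil x H r := by
  obtain ⟨v, t, s⟩ := r
  have hvx : (v : X → ℝ) x = 0 := vx0 v.2
  have hx : coneMap x (v : X → ℝ) (t : ℝ) x = (t : ℝ) := coneMap_apply_x hvx _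
  unfold Fst Ftil
  dsimp only [Qmap]
  rw [hx]
  by_cases h1 : (t : ℝ) = 1
  · rcases le_total (s : ℝ) (1 / 2) with hs | hs
    · have hτ : tauR (t : ℝ) s = 1 := by
        rw [tauR, h1, one_mul, min_eq_left (by linarith)]
      rw [hτ]
      funext z
      simp [coneMap]
    · have hσ : sigI (t : ℝ) s = 1 := by
        apply Subtype.ext
        rw [sigI_of_mem t.2 s, h1, one_mul, min_eq_right (by linarith)]
        simp
      rw [hσ, hH1, hH1]
  · have hne : (1 : ℝ) - (t : ℝ) ≠ 0 := fun hh => h1 (by linarith)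
    have huB : ∀ hm : coneMap x (v : X → ℝ) (t : ℝ) ∈ realizationSet (insert x {z : X | z < x}),
        uB x c ⟨coneMap x (v : X → ℝ) (t : ℝ), hm⟩ = v := by
      intro hm
      unfold uB
      rw [dif_neg (show ¬ coneMap x (v : X → ℝ) (t : ℝ) x = 1 by rw [hx]; exact h1)]
      apply Subtype.ext
      funext z
      show uFun x (coneMap x (v : X → ℝ) (t : ℝ)) z = (v : X → ℝ) z
      by_cases hz : z = x
      · subst hz; simp [uFun, hvx]
      · have hcx : coneMap x (v : X → ℝ) (t : ℝ) z = (1 - (t : ℝ)) * (v : X → ℝ) z := by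
          simp [coneMap, hz]
        simp only [uFun, hz, if_false, hcx, hx]
        exact mul_div_cancel_left₀ _ hne
    rw [huB _]

include c in
theorem Qmap_surj : Function.Surjective (Qmap x) := by
  rintro ⟨w, s⟩
  by_cases h : (w : X → ℝ) x = 1
  · refine ⟨(c, 1, s), ?_⟩
    unfold Qmap
    refine Prod.ext ?_ rfl
    apply Subtype.ext
    show coneMap x (c : X → ℝ) ((1 : unitInterval) : ℝ) = (w : X → ℝ)
    rw [show ((1 : unitInterval) : ℝ) = 1 from rfl, coneMap_one]
    funext z
    by_cases hz : z = x
    · subst hz; simp [h]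
    · simp [hz, rs_apex w.2 h hz]
  · have ht : (w : X → ℝ) x ∈ Set.Icc (0 : ℝ) 1 := ⟨w.2.1 x, rs_apply_le_one w.2 x⟩
    refine ⟨(⟨uFun x (w : X → ℝ), u_mem w.2 h⟩, ⟨(w : X → ℝ) x, ht⟩, s), ?_⟩
    unfold Qmap
    refine Prod.ext ?_ rfl
    apply Subtype.ext
    show coneMap x (uFun x (w : X → ℝ)) ((w : X → ℝ) x) = (w : X → ℝ)
    funext z
    have hne : (1 : ℝ) - (w : X → ℝ) x ≠ 0 := fun hh => h (by linarith)
    simp only [coneMap, uFun]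
    by_cases hz : z = x
    · subst hz; simp
    · simp only [hz, if_false]
      field_simp
      ring

theorem Fst_mem (p : ↥(realizationSet (insert x {z : X | z < x})) × unitInterval) : Fst x c H p ∈ realizationSet (insert x {z : X | z < x}) :=
  coneMap_mem (H _).2 (tauR_mem ⟨p.1.2.1 x, rs_apply_le_one p.1.2 x⟩ p.2)

theorem continuous_Ftil : Continuous (Ftil x H) := by
  apply continuous_pi
  intro z
  have h2 : Continuous fun r : ↥(realizationSet {z : X | z < x}) × unitInterval × unitInterval =>
      ((r.2.1 : ℝ)) := continuous_subtype_val.comp (continuous_fst.comp continuous_snd)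
  have h3 : Continuous fun r : ↥(realizationSet {z : X | z < x}) × unitInterval × unitInterval =>
      ((r.2.2 : ℝ)) := continuous_subtype_val.comp (continuous_snd.comp continuous_snd)
  have hτ : Continuous fun r : ↥(realizationSet {z : X | z < x}) × unitInterval × unitInterval =>
      tauR (r.2.1 : ℝ) r.2.2 := by
    unfold tauR
    exact h2.mul (continuous_const.min (continuous_const.sub (continuous_const.mul h3)))
  have hσ : Continuous fun r : ↥(realizationSet {z : X | z < x}) × unitInterval × unitInterval =>
      sigI (r.2.1 : ℝ) r.2.2 := by
    unfold sigI
    exact continuous_projIcc.comp (h2.mul ((continuous_const.mul h3).min continuous_const))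
  have hHc : Continuous fun r : ↥(realizationSet {z : X | z < x}) × unitInterval × unitInterval =>
      ((H (sigI (r.2.1 : ℝ) r.2.2, r.1)) : X → ℝ) z :=
    (continuous_apply z).comp (continuous_subtype_val.comp
      (H.continuous.comp (hσ.prodMk continuous_fst)))
  simp only [Ftil, coneMap]
  exact ((continuous_const.sub hτ).mul hHc).add (hτ.mul continuous_const)

theorem continuous_Fst (hH1 : ∀ v, H (1, v) = c) : Continuous (Fst x c H) := by
  haveI : CompactSpace ↥(realizationSet {z : X | z < x}) :=
    isCompact_iff_compactSpace.mp (rs_isCompact _)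
  have hQc : Continuous (Qmap x) := by
    refine Continuous.prodMk (Continuous.subtype_mk ?_ _) (continuous_snd.comp continuous_snd)
    apply continuous_pi
    intro z
    have h1 : Continuous fun r : ↥(realizationSet {z : X | z < x}) × unitInterval × unitInterval =>
        ((r.1 : X → ℝ) z) :=
      (continuous_apply z).comp (continuous_subtype_val.comp continuous_fst)
    have h2 : Continuous fun r : ↥(realizationSet {z : X | z < x}) × unitInterval × unitInterval =>
        ((r.2.1 : ℝ)) := continuous_subtype_val.comp (continuous_fst.comp continuous_snd)
    simp only [coneMap]
    exact ((continuous_const.sub h2).mul h1).add (h2.mul continuous_const)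
  have hq : IsQuotientMap (Qmap x) := (hQc.isClosedMap).isQuotientMap hQc (Qmap_surj x c)
  rw [hq.continuous_iff]
  have he : Fst x c H ∘ Qmap x = Ftil x H := funext (Fst_Qmap x c H hH1)
  rw [he]
  exact continuous_Ftil x H

theorem Fst_s0 (hH0 : ∀ v, H (0, v) = v)
    (w : ↥(realizationSet (insert x {z : X | z < x}))) : Fst x c H (w, 0) = (w : X → ℝ) := by
  unfold Fst
  rw [sigI_of_s0, tauR_of_s0, hH0]
  by_cases h : (w : X → ℝ) x = 1
  · rw [h]
    unfold uB
    rw [dif_pos h, coneMap_one]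
    funext z
    by_cases hz : z = x
    · subst hz; simp [h]
    · simp [hz, rs_apex w.2 h hz]
  · unfold uB
    rw [dif_neg h]
    funext z
    have hne : (1 : ℝ) - (w : X → ℝ) x ≠ 0 := fun hh => h (by linarith)
    simp only [coneMap, uFun]
    by_cases hz : z = x
    · subst hz; simp
    · simp only [hz, if_false]
      field_simp
      ring

theorem Fst_t0 (hH0 : ∀ v, H (0, v) = v) (w : ↥(realizationSet (insert x {z : X | z < x})))
    (hw0 : (w : X → ℝ) x = 0) (s : unitInterval) :
    Fst x c H (w, s) = (w : X → ℝ) := by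
  unfold Fst
  rw [hw0, sigI_of_t0, tauR_of_t0, hH0, coneMap_zero]
  unfold uB
  rw [dif_neg (by rw [hw0]; norm_num)]
  funext z
  simp only [uFun]
  by_cases hz : z = x
  · subst hz; simp [hw0]
  · simp [hz, hw0]

theorem Fst_s1 (w : ↥(realizationSet (insert x {z : X | z < x}))) :
    Fst x c H (w, 1) = ((H (sigI ((w : X → ℝ) x) 1, uB x c w)) : X → ℝ) := by
  unfold Fst
  rw [tauR_of_s1, coneMap_zero]

theorem mem_star (hmax : ∀ z, ¬ x < z) {w : X → ℝ} (hw : w ∈ realizationSet (Set.univ : Set X))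
    (hx : w x ≠ 0) : w ∈ realizationSet (insert x {z : X | z < x}) := by
  refine ⟨hw.1, hw.2.1, ?_, hw.2.2.2⟩
  intro z hz
  rcases eq_or_ne z x with rfl | hne
  · exact Set.mem_insert _ _
  · rcases hw.2.2.2 (Function.mem_support.mpr (Function.mem_support.mp hz))
      (Function.mem_support.mpr hx) hne with h | h
    · exact Set.mem_insert_of_mem _ (lt_of_le_of_ne h hne)
    · exact absurd (lt_of_le_of_ne h (Ne.symm hne)) (hmax z)

open Classical in
noncomputable def Fglob (p : unitInterval × ↥(realizationSet (Set.univ : Set X))) : X → ℝ :=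
  if h : (p.2 : X → ℝ) ∈ realizationSet (insert x {z : X | z < x})
  then Fst x c H (⟨(p.2 : X → ℝ), h⟩, p.1)
  else (p.2 : X → ℝ)

theorem Fglob_mem (p : unitInterval × ↥(realizationSet (Set.univ : Set X))) : Fglob x c H p ∈ realizationSet (Set.univ : Set X) := by
  unfold Fglob
  split
  · exact rs_mono (Set.subset_univ _) (Fst_mem x c H _)
  · exact p.2.2

theorem Fglob_s0 (hH0 : ∀ v, H (0, v) = v) (w : ↥(realizationSet (Set.univ : Set X))) : Fglob x c H (0, w) = (w : X → ℝ) := by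
  unfold Fglob
  split
  · exact Fst_s0 x c H hH0 _
  · rfl

theorem Fglob_t0 (hH0 : ∀ v, H (0, v) = v) (s : unitInterval)
    (w : ↥(realizationSet (Set.univ : Set X))) (hw0 : (w : X → ℝ) x = 0) :
    Fglob x c H (s, w) = (w : X → ℝ) := by
  unfold Fglob
  split
  · exact Fst_t0 x c H hH0 _ hw0 s
  · rfl

theorem Fglob_s1_mem (hmax : ∀ z, ¬ x < z) (w : ↥(realizationSet (Set.univ : Set X))) :
    Fglob x c H (1, w) ∈ realizationSet ({x}ᶜ : Set X) := by
  have hm : Fglob x c H (1, w) ∈ realizationSet (Set.univ : Set X) := Fglob_mem x c H _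
  have hx0 : Fglob x c H (1, w) x = 0 := by
    unfold Fglob
    split
    · rw [Fst_s1]
      exact vx0 (H _).2
    · rename_i h
      by_contra h0
      exact h (mem_star x hmax w.2 h0)
  refine ⟨hm.1, hm.2.1, ?_, hm.2.2.2⟩
  intro z hz
  simp only [Set.mem_compl_iff, Set.mem_singleton_iff]
  rintro rfl
  exact (Function.mem_support.mp hz) hx0

theorem continuous_Fglob (hmax : ∀ z, ¬ x < z) (hH0 : ∀ v, H (0, v) = v)
    (hH1 : ∀ v, H (1, v) = c) : Continuous (Fglob x c H) := by
  have hFst : Continuous (Fst x c H) := continuous_Fst x c H hH1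
  have hcA : ContinuousOn (Fglob x c H)
      {p : unitInterval × ↥(realizationSet (Set.univ : Set X)) | (p.2 : X → ℝ) x = 0} := by
    refine ContinuousOn.congr ((continuous_subtype_val.comp continuous_snd).continuousOn) ?_
    intro p hp
    exact Fglob_t0 x c H hH0 p.1 p.2 hp
  have hcB : ContinuousOn (Fglob x c H)
      {p : unitInterval × ↥(realizationSet (Set.univ : Set X)) |
        (p.2 : X → ℝ) ∈ realizationSet (insert x {z : X | z < x})} := by
    rw [continuousOn_iff_continuous_restrict]
    have he : Set.restrict {p : unitInterval × ↥(realizationSet (Set.univ : Set X)) |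
        (p.2 : X → ℝ) ∈ realizationSet (insert x {z : X | z < x})} (Fglob x c H) =
        fun q : ↥{p : unitInterval × ↥(realizationSet (Set.univ : Set X)) |
            (p.2 : X → ℝ) ∈ realizationSet (insert x {z : X | z < x})} =>
          Fst x c H (⟨((q : unitInterval × ↥(realizationSet (Set.univ : Set X))).2 : X → ℝ),
            q.2⟩, (q : unitInterval × ↥(realizationSet (Set.univ : Set X))).1) := by
      funext q
      show Fglob x c H q.1 = _
      unfold Fglob
      rw [dif_pos (show ((q : unitInterval × ↥(realizationSet (Set.univ : Set X))).2 : X → ℝ) ∈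
        realizationSet (insert x {z : X | z < x}) from q.2)]
    change Continuous (Set.restrict _ (Fglob x c H))
    rw [he]
    refine (continuous_Fst x c H hH1).comp (Continuous.prodMk (Continuous.subtype_mk ?_ _) ?_)
    · exact continuous_subtype_val.comp (continuous_snd.comp continuous_subtype_val)
    · exact continuous_fst.comp continuous_subtype_val
  have hA : IsClosed {p : unitInterval × ↥(realizationSet (Set.univ : Set X)) |
      (p.2 : X → ℝ) x = 0} :=
    isClosed_eq ((continuous_apply x).comp (continuous_subtype_val.comp continuous_snd))
      continuous_const
  have hB : IsClosed {p : unitInterval × ↥(realizationSet (Set.univ : Set X)) |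
      (p.2 : X → ℝ) ∈ realizationSet (insert x {z : X | z < x})} :=
    (rs_isClosed _).preimage (continuous_subtype_val.comp continuous_snd)
  refine (locallyFinite_of_finite _).continuous
    (f := fun b : Bool => cond b
      {p : unitInterval × ↥(realizationSet (Set.univ : Set X)) | (p.2 : X → ℝ) x = 0}
      {p : unitInterval × ↥(realizationSet (Set.univ : Set X)) |
        (p.2 : X → ℝ) ∈ realizationSet (insert x {z : X | z < x})})
    ?_ ?_ ?_
  · rw [← Set.union_eq_iUnion]
    ext p
    simp only [Set.mem_union, Set.mem_univ, iff_true, Set.mem_setOf_eq]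
    by_cases h : (p.2 : X → ℝ) x = 0
    · exact Or.inl h
    · exact Or.inr (mem_star x hmax p.2.2 h)
  · rintro (_ | _)
    · exact hB
    · exact hA
  · rintro (_ | _)
    · exact hcB
    · exact hcA

end Main

end RemoveMax


theorem remove_maximal_contractible_downset {X : Type*} [PartialOrder X] [Fintype X]
    (x : X) (hmax : ∀ z : X, ¬ x < z)
    (hcontr : HomotopicallyTrivial {z : X | z < x}) :
    ∃ e : ContinuousMap.HomotopyEquiv
        ↥(realizationSet ({x}ᶜ : Set X)) ↥(realizationSet (Set.univ : Set X)),
      ∀ w : ↥(realizationSet ({x}ᶜ : Set X)), ((e.toFun w : X → ℝ) = (w : X → ℝ)) := by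
  classical
  haveI hC : ContractibleSpace ↥(realizationSet {z : X | z < x}) := hcontr
  obtain ⟨c, ⟨Hh⟩⟩ := id_nullhomotopic ↥(realizationSet {z : X | z < x})
  let H : C(unitInterval × ↥(realizationSet {z : X | z < x}),
      ↥(realizationSet {z : X | z < x})) := Hh.toContinuousMap
  have hH0 : ∀ v, H (0, v) = v := fun v => Hh.apply_zero v
  have hH1 : ∀ v, H (1, v) = c := fun v => Hh.apply_one v
  let incl : C(↥(realizationSet ({x}ᶜ : Set X)), ↥(realizationSet (Set.univ : Set X))) :=
    ⟨fun w => ⟨(w : X → ℝ), RemoveMax.rs_mono (Set.subset_univ _) w.2⟩,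
      Continuous.subtype_mk continuous_subtype_val _⟩
  let g : C(↥(realizationSet (Set.univ : Set X)), ↥(realizationSet ({x}ᶜ : Set X))) :=
    ⟨fun w => ⟨RemoveMax.Fglob x c H (1, w), RemoveMax.Fglob_s1_mem x c H hmax w⟩,
      Continuous.subtype_mk ((RemoveMax.continuous_Fglob x c H hmax hH0 hH1).comp
        (continuous_const.prodMk continuous_id)) _⟩
  refine ⟨⟨incl, g, ?_, ?_⟩, fun w => rfl⟩
  · have hgi : g.comp incl = ContinuousMap.id _ := by
      apply ContinuousMap.ext
      intro w
      apply Subtype.ext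
      have hw0 : (w : X → ℝ) x = 0 :=
        RemoveMax.rs_apply_eq_zero w.2 (by simp)
      exact RemoveMax.Fglob_t0 x c H hH0 1 (incl w) hw0
    rw [hgi]
  · have Fh : ContinuousMap.Homotopy (ContinuousMap.id ↥(realizationSet (Set.univ : Set X)))
        (incl.comp g) :=
      { toFun := fun p => ⟨RemoveMax.Fglob x c H p, RemoveMax.Fglob_mem x c H p⟩
        continuous_toFun := Continuous.subtype_mk
          (RemoveMax.continuous_Fglob x c H hmax hH0 hH1) _
        map_zero_left := fun w => Subtype.ext (RemoveMax.Fglob_s0 x c H hH0 w)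
        map_one_left := fun w => Subtype.ext rfl }
    exact ⟨Fh.symm⟩
end
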